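/- Natural revision is a lexicographic revision by the conjunction of current beliefs: for every total preorder C and formula P, the preorder C nat(P) is equivalent to C lex(K), where K is a formula whose models are exactly min(C,P), the minimal models of P in C. -/

import Mathlib

open Set
open scoped Classical

variable {M : Type*}

namespace BeliefRevision

/-- `minSet C P`: the minimal models of `P` according to the total preorder `C`,
i.e. `C(i) ∩ Mod(P)` for the least `i` making this nonempty. -/
noncomputable def minSet : List (Set M) → Set M → Set M
  | [], _ => ∅
  | X :: rest, P => if (X ∩ P).Nonempty then X ∩ P else minSet rest P

/-- Equivalence of total preorders: same minimal models for every formula. -/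
def equivC (C C' : List (Set M)) : Prop :=
  ∀ P : Set M, minSet C P = minSet C' P

/-- A total preorder: an ordered partition (empty classes allowed) of all models. -/
def IsPartition (C : List (Set M)) : Prop :=
  C.Pairwise Disjoint ∧ C.foldr (· ∪ ·) ∅ = Set.univ

/-- Lexicographic revision. -/
def lex (C : List (Set M)) (L : Set M) : List (Set M) :=
  C.map (· ∩ L) ++ C.map (· \ L)

/-- Refinement. -/
def refi (C : List (Set M)) (R : Set M) : List (Set M) :=
  C.flatMap fun X => [X ∩ R, X \ R]

/-- Natural revision: `[C(i)∩P, C(0),...,C(i-1), C(i)\P, C(i+1),...,C(m)]`. -/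
noncomputable def natr : List (Set M) → Set M → List (Set M)
  | [], _ => []
  | X :: rest, P =>
    if (X ∩ P).Nonempty then (X ∩ P) :: (X \ P) :: rest
    else
      match natr rest P with
      | a :: r => a :: X :: r
      | [] => [X]

/-- Severe antiwithdrawal: merge classes `0..i` where `i` is least with `C(i)∩P ≠ ∅`. -/
noncomputable def sevw : List (Set M) → Set M → List (Set M)
  | [], _ => []
  | X :: rest, P =>
    if (X ∩ P).Nonempty then X :: rest
    else
      match sevw rest P with
      | a :: r => (X ∪ a) :: r
      | [] => [X]

/-- Restrained revision. -/
noncomputable def res : List (Set M) → Set M → List (Set M)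
  | [], _ => []
  | X :: rest, P =>
    if (X ∩ P).Nonempty then
      (X ∩ P) :: (X \ P) :: rest.flatMap (fun Y => [Y ∩ P, Y \ P])
    else
      match res rest P with
      | a :: r => a :: (X ∩ P) :: (X \ P) :: r
      | [] => [X ∩ P, X \ P]

/-- Very radical revision. -/
def rad (C : List (Set M)) (P : Set M) : List (Set M) :=
  C.map (· ∩ P) ++ [C.foldr (· ∪ ·) ∅ \ P]

/-- Severe revision: `[C(i)∩P, (C(0)∪...∪C(i))\P, C(i+1),...,C(m)]`. -/
noncomputable def sevr : List (Set M) → Set M → List (Set M)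
  | [], _ => []
  | X :: rest, P =>
    if (X ∩ P).Nonempty then (X ∩ P) :: (X \ P) :: rest
    else
      match sevr rest P with
      | a :: b :: r => a :: (X ∪ b) :: r
      | l => X :: l

/-- Moderate severe revision. -/
noncomputable def msev (C : List (Set M)) (P : Set M) : List (Set M) :=
  C.map (· ∩ P) ++ (sevw C P).map (· \ P)

/-- Merge `A` with the first nonempty class of the list (helper for `psev`). -/
noncomputable def mergeJ (A : Set M) : List (Set M) → List (Set M)
  | [] => [A]
  | Y :: r => if Y.Nonempty then (A ∪ Y) :: r else mergeJ A r

/-- Plain severe revision: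
`[C(i)∩P, C(0)∪...∪(C(i)\P)∪C(j), C(j+1),...,C(m)]` with `i` least with
`C(i)∩P ≠ ∅` and `j` the least index `> i` with `C(j) ≠ ∅`. -/
noncomputable def psev : List (Set M) → Set M → List (Set M)
  | [], _ => []
  | X :: rest, P =>
    if (X ∩ P).Nonempty then (X ∩ P) :: mergeJ (X \ P) rest
    else
      match psev rest P with
      | a :: b :: r => a :: (X ∪ b) :: r
      | l => X :: l

/-- Full meet revision. -/
noncomputable def full (C : List (Set M)) (P : Set M) : List (Set M) :=
  [minSet C P, Set.univ \ minSet C P]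

/-- `maxset F [F₁,...,Fₖ]`: conjoin each `Fᵢ` in order whenever consistent. -/
noncomputable def maxset : Set M → List (Set M) → Set M
  | F, [] => F
  | F, L :: rest => maxset (if (F ∩ L).Nonempty then F ∩ L else F) rest

/-- The underformula `under(S; Lₙ,...,L₁)`. -/
noncomputable def under : Set M → List (Set M) → Set M
  | _, [] => Set.univ
  | S, L :: rest =>
    if (S ∩ L).Nonempty then L ∩ under (S ∩ L) rest else L ∪ under S rest

/-- `upTo C S = C(0) ∪ ... ∪ C(i)` where `i` is least with `C(i)∩S ≠ ∅`. -/
noncomputable def upTo : List (Set M) → Set M → Set M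
  | [], _ => ∅
  | X :: rest, S => if (X ∩ S).Nonempty then X else X ∪ upTo rest S

noncomputable def longestAux : Set M → List (Set M) → Set M
  | A, [] => A
  | A, L :: rest => if (A ∩ L).Nonempty then longestAux (A ∩ L) rest else A

/-- Longest consistent conjunction of a sequence of formulas. -/
noncomputable def longest : List (Set M) → Set M
  | [] => Set.univ
  | L :: rest => longestAux L rest

/-- `rev` is a bottom-refining revision on `(C,P)`: it is a revision
(`min(C rev(P),⊤) = min(C,P)`) and, whenever `C(0)∩Mod(P) ≠ ∅`, class zero of
the result is `C(0)∩Mod(P)` and class one is `C(0)\Mod(P)`. -/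
noncomputable def BottomRefining (rev : List (Set M) → Set M → List (Set M))
    (C : List (Set M)) (P : Set M) : Prop :=
  minSet (rev C P) Set.univ = minSet C P ∧
  ((C.getD 0 ∅ ∩ P).Nonempty →
    (rev C P).getD 0 ∅ = C.getD 0 ∅ ∩ P ∧
    (rev C P).getD 1 ∅ = C.getD 0 ∅ \ P)

lemma minSet_subset (C : List (Set M)) (P : Set M) : minSet C P ⊆ P := by
  induction C with
  | nil => simp [minSet]
  | cons X rest ih =>
    simp only [minSet]
    split
    · exact inter_subset_right
    · exact ih

lemma minSet_nonempty (C : List (Set M)) (P : Set M)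
    (h : (P ∩ C.foldr (· ∪ ·) ∅).Nonempty) : (minSet C P).Nonempty := by
  induction C with
  | nil => simp at h
  | cons X rest ih =>
    simp only [minSet]
    by_cases hx : (X ∩ P).Nonempty
    · rw [if_pos hx]; exact hx
    · rw [if_neg hx]
      apply ih
      rw [Set.not_nonempty_iff_eq_empty] at hx
      obtain ⟨x, hxP, hxU⟩ := h
      rcases hxU with hxX | hxR
      · exact absurd (by rw [← hx]; exact ⟨hxX, hxP⟩ : x ∈ (∅ : Set M)) (Set.notMem_empty x)
      · exact ⟨x, hxP, hxR⟩

lemma natr_eq_cons (C : List (Set M)) (hC : C.Pairwise Disjoint) (P : Set M)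
    (hne : (minSet C P).Nonempty) :
    natr C P = minSet C P :: C.map (· \ minSet C P) := by
  induction C with
  | nil => simp [minSet] at hne
  | cons X rest ih =>
    rw [List.pairwise_cons] at hC
    simp only [natr, minSet] at hne ⊢
    by_cases hx : (X ∩ P).Nonempty
    all_goals simp only [hx, if_true, if_false] at hne ⊢
    · -- K = X ∩ P
      simp only [List.map_cons, List.cons.injEq, true_and]
      constructor
      · ext x; simp (config := {contextual := true}) [Set.mem_diff, iff_def]
      · symm
        have : ∀ Y ∈ rest, Y \ (X ∩ P) = Y := by
          intro Y hY
          have hd : Disjoint Y (X ∩ P) :=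
            ((hC.1 Y hY).symm.mono_right inter_subset_left)
          exact sdiff_eq_self_iff_disjoint.2 hd.symm
        calc rest.map (fun x => x \ (X ∩ P)) = rest.map id :=
              List.map_congr_left this
          _ = rest := List.map_id rest
    · rw [ih hC.2 hne]
      have hXK : X \ minSet rest P = X := by
        apply sdiff_eq_self_iff_disjoint.2
        rw [Set.disjoint_iff_inter_eq_empty, Set.eq_empty_iff_forall_notMem]
        intro x hx'
        exact hx ⟨x, hx'.2, minSet_subset rest P hx'.1⟩
      simp [hXK]

lemma minSet_append_triv (L1 : List (Set M)) (K : Set M) (L2 : List (Set M))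
    (Q : Set M) (hK : K.Nonempty) (h1 : ∀ Y ∈ L1, Y = ∅ ∨ Y = K)
    (h2 : K ∈ L1) :
    minSet (L1 ++ L2) Q = minSet (K :: L2) Q := by
  induction L1 with
  | nil => simp at h2
  | cons Y rest ih =>
    rcases h1 Y (List.mem_cons_self) with hY | hY
    · subst hY
      simp only [List.cons_append, minSet, Set.empty_inter,
        Set.not_nonempty_empty, if_false]
      have h2' : K ∈ rest := by
        rcases List.mem_cons.1 h2 with h | h
        · exact absurd (h ▸ hK) Set.not_nonempty_empty
        · exact h
      exact ih (fun Z hZ => h1 Z (List.mem_cons_of_mem _ hZ)) h2'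
    · subst hY
      simp only [List.cons_append, minSet]
      by_cases hq : (Y ∩ Q).Nonempty
      · rw [if_pos hq, if_pos hq]
      · rw [if_neg hq, if_neg hq]
         -- (Y ∩ Q) empty, all remaining entries of rest are ∅ or Y, skip them
        have : ∀ L : List (Set M), (∀ Z ∈ L, Z = ∅ ∨ Z = Y) →
            minSet (L ++ L2) Q = minSet L2 Q := by
          intro L hL
          induction L with
          | nil => simp
          | cons Z r ihr =>
            rcases hL Z (List.mem_cons_self) with hZ | hZ <;> subst hZ <;>
              simp only [List.cons_append, minSet, Set.empty_inter,
                Set.not_nonempty_empty, if_false, hq] <;>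
              exact ihr (fun W hW => hL W (List.mem_cons_of_mem _ hW))
        exact this _ (fun Z hZ => h1 Z (List.mem_cons_of_mem _ hZ))

lemma inter_minSet (C : List (Set M)) (hC : C.Pairwise Disjoint) (P : Set M)
    (hne : (minSet C P).Nonempty) :
    (∀ Y ∈ C, Y ∩ minSet C P = ∅ ∨ Y ∩ minSet C P = minSet C P) ∧
    minSet C P ∈ C.map (· ∩ minSet C P) := by
  induction C with
  | nil => simp [minSet] at hne
  | cons X rest ih =>
    rw [List.pairwise_cons] at hC
    simp only [minSet] at hne ⊢
    by_cases hx : (X ∩ P).Nonempty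
    all_goals simp only [hx, if_true, if_false] at hne ⊢
    · refine ⟨?_, ?_⟩
      · intro Y hY
        rcases List.mem_cons.1 hY with rfl | hY
        · right; ext x; simp (config := {contextual := true}) [iff_def]
        · left
          have hd : Disjoint Y (X ∩ P) :=
            ((hC.1 Y hY).symm.mono_right inter_subset_left)
          exact Set.disjoint_iff_inter_eq_empty.1 hd
      · simp only [List.map_cons, List.mem_cons]
        left; ext x; simp (config := {contextual := true}) [iff_def]
    · obtain ⟨hall, hmem⟩ := ih hC.2 hne
      refine ⟨?_, ?_⟩
      · intro Y hY
        rcases List.mem_cons.1 hY with rfl | hY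
        · left
          rw [Set.eq_empty_iff_forall_notMem]
          intro x hx'
          exact hx ⟨x, hx'.1, minSet_subset rest P hx'.2⟩
        · exact hall Y hY
      · exact List.mem_cons_of_mem _ hmem

/-- Natural revision is a lexicographic revision by a formula whose models are
exactly `min(C,P)`. -/
theorem natr_eq_lex (C : List (Set M)) (hC : IsPartition C) (P K : Set M)
    (hP : P.Nonempty) (hK : K = minSet C P) :
    equivC (natr C P) (lex C K) := by
  subst hK
  have hne : (minSet C P).Nonempty :=
    minSet_nonempty C P (by rw [hC.2]; simpa using hP)
  intro Q
  rw [natr_eq_cons C hC.1 P hne, lex]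
  obtain ⟨hall, hmem⟩ := inter_minSet C hC.1 P hne
  rw [minSet_append_triv (C.map (· ∩ minSet C P)) (minSet C P) _ Q hne
    (fun Y hY => by obtain ⟨Z, hZ, rfl⟩ := List.mem_map.1 hY; exact hall Z hZ)
    hmem]

end BeliefRevision
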